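/- arXiv:1906.10047 — 2 statements merged into one kernel-verified Lean document; each statement's English description precedes it below -/
import Mathlib

section
/- Let p₁,…,pₙ be τ-multi-polynomials that are similar (erasing τ and abstracting coefficients yields the same abstract MP) and whose common abstraction ⌊p⌋ is neat (dependency graph minus self-loops is a DAG respecting the index order, and no component has a monomial divisible by its own variable other than of degree 1). Define the self-dependent cut ⌈q⌉ of such q by ⌈q⌉[i] = xᵢ if i is self-dependent and ⌈q⌉[i] = q[i] otherwise. Then for each ℓ ≤ n, the composition q_ℓ := p₁ ∘ ⌈p₂⌉ ∘ ⋯ ∘ ⌈p_ℓ⌉ has the property that for every i, q_ℓ[i] depends only on variables x_j that are either self-dependent or satisfy j ≤ i − ℓ. -/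
open MvPolynomial

/-- Variable set for τ-polynomials: `n` program variables plus the extra variable τ. -/
abbrev Vn (n : ℕ) := Fin n ⊕ Unit

open Classical in
/-- The linear part `Lin(r)`: the sum of monomials of `r` of the form `a·xᵢ`
(linear in a single program variable, τ-free). -/
noncomputable def linPart {n : ℕ} (r : MvPolynomial (Vn n) ℕ) : MvPolynomial (Vn n) ℕ :=
  ∑ m ∈ r.support.filter (fun m => ∃ i : Fin n, m = Finsupp.single (Sum.inl i) 1),
    monomial m (r.coeff m)

open Classical in
/-- The non-linear part `NonLin(r)`: all remaining monomials, so `r = Lin(r) + NonLin(r)`. -/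
noncomputable def nonLinPart {n : ℕ} (r : MvPolynomial (Vn n) ℕ) : MvPolynomial (Vn n) ℕ :=
  ∑ m ∈ r.support.filter (fun m => ¬ ∃ i : Fin n, m = Finsupp.single (Sum.inl i) 1),
    monomial m (r.coeff m)

/-- Evaluation of a τ-polynomial at `x ∈ ℕⁿ` and `τ = t`, as a real number. -/
noncomputable def evalR {n : ℕ} (r : MvPolynomial (Vn n) ℕ) (x : Fin n → ℕ) (t : ℕ) : ℝ :=
  aeval (Sum.elim (fun i => (x i : ℝ)) (fun _ => (t : ℝ))) r

/-- `c⋄r = Lin(r) + c·NonLin(r)`, evaluated at `(x, t)`. -/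
noncomputable def cDia {n : ℕ} (c : ℝ) (r : MvPolynomial (Vn n) ℕ)
    (x : Fin n → ℕ) (t : ℕ) : ℝ :=
  evalR (linPart r) x t + c * evalR (nonLinPart r) x t

/-- Composition `r ∘ p`: substitute `p[i]` for `xᵢ` in `r`, leaving τ fixed. -/
noncomputable def tcomp {n : ℕ} (r : MvPolynomial (Vn n) ℕ)
    (p : Fin n → MvPolynomial (Vn n) ℕ) : MvPolynomial (Vn n) ℕ :=
  bind₁ (Sum.elim p (fun _ => X (Sum.inr ()))) r

/-- Evaluation of a τ-multi-polynomial component over ℕ at `(x, t)`. -/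
noncomputable def evalN {n : ℕ} (r : MvPolynomial (Vn n) ℕ) (x : Fin n → ℕ) (t : ℕ) : ℕ :=
  eval (Sum.elim x (fun _ => t)) r


/-- The abstraction map `α`: replace every nonzero coefficient by `1`. -/
noncomputable def absP {σ : Type*} (p : MvPolynomial σ ℕ) : MvPolynomial σ ℕ :=
  ∑ m ∈ p.support, monomial m 1

/-- `⌊q⌋ = α(q[1/τ])`: substitute `1` for τ, then flatten coefficients to 0/1. -/
noncomputable def flat {n : ℕ} (q : MvPolynomial (Vn n) ℕ) : MvPolynomial (Fin n) ℕ :=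
  absP (aeval (Sum.elim X (fun _ => 1)) q)

/-- Composition of τ-multi-polynomials: `(f ∘ g)[i] = f[i](g)`, τ fixed. -/
noncomputable def mpComp {n : ℕ} (f g : Fin n → MvPolynomial (Vn n) ℕ) :
    Fin n → MvPolynomial (Vn n) ℕ :=
  fun i => tcomp (f i) g

open Classical in
/-- The self-dependent cut `⌈q⌉` relative to the common abstraction `A`:
self-dependent components are replaced by the identity `xᵢ`. -/
noncomputable def cutA {n : ℕ} (A : Fin n → MvPolynomial (Fin n) ℕ)
    (q : Fin n → MvPolynomial (Vn n) ℕ) : Fin n → MvPolynomial (Vn n) ℕ :=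
  fun i => if i ∈ (A i).vars then X (Sum.inl i) else q i

/-- `chainMP A p ℓ = q_{ℓ+1} = p₁ ∘ ⌈p₂⌉ ∘ ⋯ ∘ ⌈p_{ℓ+1}⌉`. -/
noncomputable def chainMP {n : ℕ} (A : Fin n → MvPolynomial (Fin n) ℕ)
    (p : ℕ → Fin n → MvPolynomial (Vn n) ℕ) :
    ℕ → Fin n → MvPolynomial (Vn n) ℕ
  | 0 => p 1
  | ℓ + 1 => mpComp (chainMP A p ℓ) (cutA A (p (ℓ + 2)))

/-- Restriction of an exponent vector to the program variables. -/
noncomputable def rx {n : ℕ} (m : Vn n →₀ ℕ) : Fin n →₀ ℕ :=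
  Finsupp.comapDomain Sum.inl m Sum.inl_injective.injOn

lemma rx_apply {n : ℕ} (m : Vn n →₀ ℕ) (j : Fin n) : rx m j = m (Sum.inl j) := rfl

lemma aeval_elim_monomial {n : ℕ} (m : Vn n →₀ ℕ) (c : ℕ) :
    aeval (Sum.elim X (fun _ => (1 : MvPolynomial (Fin n) ℕ))) (monomial m c)
      = monomial (rx m) c := by
  rw [aeval_monomial, monomial_eq, algebraMap_eq]
  congr 1
  induction m using Finsupp.induction with
  | zero => simp [rx]
  | single_add v k m hv hk ih =>
      have hadd : rx (Finsupp.single v k + m) = rx (Finsupp.single v k) + rx m := by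
        simp [rx, Finsupp.comapDomain_add_of_injective Sum.inl_injective]
      rw [Finsupp.prod_add_index (by simp) (fun _ _ _ _ => pow_add _ _ _), hadd,
        Finsupp.prod_add_index (by simp) (fun _ _ _ _ => pow_add _ _ _), ih]
      congr 1
      cases v with
      | inl i =>
          have : rx (Finsupp.single (Sum.inl i : Vn n) k) = Finsupp.single i k := by
            ext j
            rw [rx_apply]
            rcases eq_or_ne i j with rfl | hij
            · simp
            · simp [Finsupp.single_apply, hij, fun h => hij (Sum.inl_injective h)]
          simp [this, Finsupp.prod_single_index]
      | inr u =>
          have : rx (Finsupp.single (Sum.inr u : Vn n) k) = 0 := by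
            ext j; rw [rx_apply]; simp [Finsupp.single_apply]
          simp [this, Finsupp.prod_single_index]

lemma absP_support {σ : Type*} (p : MvPolynomial σ ℕ) : (absP p).support = p.support := by
  classical
  ext m
  simp only [mem_support_iff, absP, coeff_sum, coeff_monomial]
  rw [Finset.sum_ite_eq' p.support m (fun _ => 1)]
  by_cases h : m ∈ p.support <;> simp_all [mem_support_iff]

lemma rx_mem_support {n : ℕ} (q : MvPolynomial (Vn n) ℕ) (m : Vn n →₀ ℕ)
    (hm : m ∈ q.support) :
    rx m ∈ (aeval (Sum.elim X (fun _ => (1 : MvPolynomial (Fin n) ℕ))) q).support := by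
  classical
  rw [mem_support_iff]
  intro h0
  have hq : aeval (Sum.elim X (fun _ => (1 : MvPolynomial (Fin n) ℕ))) q
      = ∑ m' ∈ q.support, monomial (rx m') (coeff m' q) := by
    conv_lhs => rw [q.as_sum, map_sum]
    exact Finset.sum_congr rfl fun m' _ => aeval_elim_monomial m' (coeff m' q)
  rw [hq, coeff_sum] at h0
  have := (Finset.sum_eq_zero_iff.mp h0) m hm
  rw [coeff_monomial, if_pos rfl] at this
  exact (mem_support_iff.mp hm) this

lemma mem_vars_flat {n : ℕ} (q : MvPolynomial (Vn n) ℕ) (j : Fin n)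
    (h : (Sum.inl j : Vn n) ∈ q.vars) : j ∈ (flat q).vars := by
  rw [mem_vars] at h ⊢
  obtain ⟨m, hm, hj⟩ := h
  refine ⟨rx m, ?_, ?_⟩
  · rw [flat, absP_support]; exact rx_mem_support q m hm
  · rw [Finsupp.mem_support_iff, rx_apply]; exact Finsupp.mem_support_iff.mp hj

/-- Self-dependent-cut lemma.  Let `p₁,…,pₙ` be similar τ-multi-polynomials with
common neat abstraction `A`.  Then (1-based) `q_ℓ = p₁ ∘ ⌈p₂⌉ ∘ ⋯ ∘ ⌈p_ℓ⌉`
satisfies: each `q_ℓ[i]` depends only on variables `x_j` which are self-dependent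
or have `j ≤ i − ℓ`.  (Here `chainMP A p ℓ = q_{ℓ+1}`, and `j ≤ i − ℓ` in 1-based
indexing reads `j + ℓ + 1 ≤ i` on 0-based values for `q_{ℓ+1}`.) -/

theorem stmt11 {n : ℕ} (A : Fin n → MvPolynomial (Fin n) ℕ)
    (p : ℕ → Fin n → MvPolynomial (Vn n) ℕ)
    (hsim : ∀ k, 1 ≤ k → k ≤ n → ∀ i, flat (p k i) = A i)
    (hneatDAG : ∀ i j : Fin n, j ∈ (A i).vars → j ≤ i)
    (hneatSelf : ∀ i : Fin n, ∀ m ∈ (A i).support,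
      m i ≠ 0 → m = Finsupp.single i 1) :
    ∀ ℓ : ℕ, ℓ + 1 ≤ n → ∀ i j : Fin n,
      (Sum.inl j : Vn n) ∈ (chainMP A p ℓ i).vars →
        j ∈ (A j).vars ∨ (j : ℕ) + (ℓ + 1) ≤ (i : ℕ) := by
  intro ℓ
  induction ℓ with
  | zero =>
      intro hn i j hj
      have hA : j ∈ (A i).vars := by
        rw [← hsim 1 le_rfl hn i]
        exact mem_vars_flat _ _ hj
      rcases eq_or_ne j i with rfl | hne
      · exact Or.inl hA
      · have hle : (j : ℕ) ≤ (i : ℕ) := hneatDAG i j hA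
        exact Or.inr (by have : (j:ℕ) ≠ (i:ℕ) := fun h => hne (Fin.ext h); omega)
  | succ ℓ ih =>
      intro hn i j hj
      rw [chainMP, mpComp, tcomp] at hj
      obtain ⟨v, hv, hjv⟩ := mem_vars_bind₁ _ _ hj
      cases v with
      | inr u =>
          rw [Sum.elim_inr, vars_X] at hjv
          simp at hjv
      | inl k =>
          rw [Sum.elim_inl] at hjv
          by_cases hk : k ∈ (A k).vars
          · rw [cutA, if_pos hk, vars_X, Finset.mem_singleton] at hjv
            have : j = k := Sum.inl_injective hjv
            exact Or.inl (this ▸ hk)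
          · have hik := ih (by omega) i k hv
            have hki : (k : ℕ) + (ℓ + 1) ≤ (i : ℕ) := hik.resolve_left hk
            rw [cutA, if_neg hk] at hjv
            have hjA : j ∈ (A k).vars := by
              rw [← hsim (ℓ + 2) (by omega) (by omega) k]
              exact mem_vars_flat _ _ hjv
            have hjk : (j : ℕ) ≤ (k : ℕ) := hneatDAG k j hjA
            have hne : j ≠ k := fun h => hk (h ▸ hjA)
            have : (j : ℕ) ≠ (k : ℕ) := fun h => hne (Fin.ext h)
            exact Or.inr (by omega)
end

section
/- Let p and q be similar, τ-closed iterative τ-multi-polynomials, so each self-dependent component has the form p[i] = xᵢ + τ·p[i]′. Define τ-absorbing composition (q ⋆ p)[i] = xᵢ + τ·(p[i]′ ⊔ (q[i]′ ∘ p)) for self-dependent i, and (q ⋆ p)[i] = q[i] ∘ p otherwise. Suppose p bounds a weighted trace σ of weight t_s (meaning: for every concrete execution of σ from state x ending in y, and every t ≥ t_s, y ≤ p(x,t) componentwise) and q bounds a weighted trace ρ of weight t_r. Then q ⋆ p bounds the concatenation σρ, whose weight is t_s + t_r. -/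
open MvPolynomial

/-- The join `p ⊔ q`: coefficientwise maximum. -/
noncomputable def pjoin {σ : Type*} [DecidableEq σ] (p q : MvPolynomial σ ℕ) : MvPolynomial σ ℕ :=
  ∑ m ∈ p.support ∪ q.support, monomial m (max (p.coeff m) (q.coeff m))

/-- A weighted trace: a list of steps, each a τ-multi-polynomial with a weight. -/
abbrev WTrace (n : ℕ) := List ((Fin n → MvPolynomial (Vn n) ℕ) × ℕ)

/-- A concrete execution of a weighted trace: each step applies its
multi-polynomial with its weight substituted for τ. -/
noncomputable def runW {n : ℕ} (σ : WTrace n) (x : Fin n → ℕ) : Fin n → ℕ :=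
  σ.foldl (fun s fw => fun i => eval (Sum.elim s (fun _ => fw.2)) (fw.1 i)) x

/-- The weight of a trace: the sum of the step weights. -/
def wgt {n : ℕ} (σ : WTrace n) : ℕ := (σ.map Prod.snd).sum

/-- `p` bounds the weighted trace `σ`: for every concrete execution of `σ` from
`x` ending in `y` and every `t ≥ wgt σ`, `y ≤ p(x,t)` componentwise. -/
def boundsTr {n : ℕ} (p : Fin n → MvPolynomial (Vn n) ℕ) (σ : WTrace n) : Prop :=
  ∀ x : Fin n → ℕ, ∀ t : ℕ, wgt σ ≤ t → ∀ i,
    runW σ x i ≤ eval (Sum.elim x (fun _ => t)) (p i)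


lemma evalMono {σ : Type*} (φ : MvPolynomial σ ℕ) {v w : σ → ℕ}
    (h : ∀ s, v s ≤ w s) : eval v φ ≤ eval w φ := by
  induction φ using MvPolynomial.induction_on with
  | C a => simp
  | add f g hf hg => simpa using Nat.add_le_add hf hg
  | mul_X f s hf => simpa using Nat.mul_le_mul hf (h s)

lemma evalCoeffLe {σ : Type*} (a b : MvPolynomial σ ℕ)
    (h : ∀ m, a.coeff m ≤ b.coeff m) (v : σ → ℕ) : eval v a ≤ eval v b := by
  classical
  rw [eval_eq, eval_eq]
  have ha : (∑ m ∈ a.support, a.coeff m * ∏ i ∈ m.support, v i ^ m i)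
      = ∑ m ∈ a.support ∪ b.support, a.coeff m * ∏ i ∈ m.support, v i ^ m i := by
    refine Finset.sum_subset Finset.subset_union_left ?_
    intro m _ hm
    simp [MvPolynomial.notMem_support_iff.mp hm]
  have hb : (∑ m ∈ b.support, b.coeff m * ∏ i ∈ m.support, v i ^ m i)
      = ∑ m ∈ a.support ∪ b.support, b.coeff m * ∏ i ∈ m.support, v i ^ m i := by
    refine Finset.sum_subset Finset.subset_union_right ?_
    intro m _ hm
    simp [MvPolynomial.notMem_support_iff.mp hm]
  rw [ha, hb]
  exact Finset.sum_le_sum fun m _ => Nat.mul_le_mul_right _ (h m)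

lemma coeffPjoin {σ : Type*} [DecidableEq σ] (a b : MvPolynomial σ ℕ) (m : σ →₀ ℕ) :
    max (a.coeff m) (b.coeff m) ≤ (pjoin a b).coeff m := by
  classical
  by_cases hm : m ∈ a.support ∪ b.support
  · unfold pjoin
    rw [MvPolynomial.coeff_sum]
    rw [Finset.sum_eq_single m (fun m' _ hne => by simp [coeff_monomial, hne])
      (fun h => absurd hm h)]
    simp [coeff_monomial]
  · have ha : a.coeff m = 0 := MvPolynomial.notMem_support_iff.mp
      (fun h => hm (Finset.mem_union_left _ h))
    have hb : b.coeff m = 0 := MvPolynomial.notMem_support_iff.mp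
      (fun h => hm (Finset.mem_union_right _ h))
    simp [ha, hb]

lemma evalTcomp {n : ℕ} (r : MvPolynomial (Vn n) ℕ)
    (p : Fin n → MvPolynomial (Vn n) ℕ) (v : Vn n → ℕ) :
    eval v (tcomp r p)
      = eval (Sum.elim (fun j => eval v (p j)) (fun _ => v (Sum.inr ()))) r := by
  have h := eval₂Hom_bind₁ (RingHom.id ℕ) v (Sum.elim p (fun _ => X (Sum.inr ()))) r
  have he : ∀ (w : Vn n → ℕ) (φ : MvPolynomial (Vn n) ℕ),
      eval₂Hom (RingHom.id ℕ) w φ = eval w φ := fun _ _ => rfl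
  rw [he, he] at h
  rw [tcomp, h]
  have hfg : (fun i : Vn n => eval₂Hom (RingHom.id ℕ) v (Sum.elim p (fun _ => X (Sum.inr ())) i))
      = Sum.elim (fun j => eval v (p j)) (fun _ => v (Sum.inr ())) := by
    funext s
    cases s with
    | inl j => simp [he]
    | inr u => simp [he]
  rw [hfg]

/-- τ-absorbing composition soundness.  Let `p`, `q` be similar τ-closed
iterative τ-multi-polynomials (common abstraction `A`; self-dependent components
have the form `xᵢ + τ·p[i]′` with `p[i]′` in lower-indexed self-dependent
variables; all components depend only on self-dependent variables of index ≤ i).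
Let `r = q ⋆ p`, i.e. `r[i] = xᵢ + τ·(p[i]′ ⊔ (q[i]′ ∘ p))` for self-dependent
`i` and `r[i] = q[i] ∘ p` otherwise.  If `p` bounds `σ` and `q` bounds `ρ`
(weights all ≥ 1), then `q ⋆ p` bounds the concatenation `σρ`. -/
theorem stmt13 {n : ℕ} (A : Fin n → MvPolynomial (Fin n) ℕ)
    (p q p' q' r : Fin n → MvPolynomial (Vn n) ℕ)
    (hsimp : ∀ i, flat (p i) = A i) (hsimq : ∀ i, flat (q i) = A i)
    (hp : ∀ i, i ∈ (A i).vars →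
      p i = X (Sum.inl i) + X (Sum.inr ()) * p' i)
    (hq : ∀ i, i ∈ (A i).vars →
      q i = X (Sum.inl i) + X (Sum.inr ()) * q' i)
    (hitp : ∀ i j : Fin n, (Sum.inl j : Vn n) ∈ (p i).vars → j ∈ (A j).vars ∧ j ≤ i)
    (hitq : ∀ i j : Fin n, (Sum.inl j : Vn n) ∈ (q i).vars → j ∈ (A j).vars ∧ j ≤ i)
    (hp' : ∀ i j : Fin n, (Sum.inl j : Vn n) ∈ (p' i).vars → j ∈ (A j).vars ∧ j < i)
    (hq' : ∀ i j : Fin n, (Sum.inl j : Vn n) ∈ (q' i).vars → j ∈ (A j).vars ∧ j < i)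
    (hr : ∀ i, (i ∈ (A i).vars →
        r i = X (Sum.inl i) + X (Sum.inr ()) * pjoin (p' i) (tcomp (q' i) p)) ∧
      (i ∉ (A i).vars → r i = tcomp (q i) p))
    (σ ρ : WTrace n)
    (hwσ : ∀ st ∈ σ, 1 ≤ st.2) (hwρ : ∀ st ∈ ρ, 1 ≤ st.2)
    (hbp : boundsTr p σ) (hbq : boundsTr q ρ) :
    boundsTr r (σ ++ ρ) := by
  intro x t ht i
  have hwgt : wgt (σ ++ ρ) = wgt σ + wgt ρ := by simp [wgt]
  have hrun : runW (σ ++ ρ) x = runW ρ (runW σ x) := by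
    simp [runW, List.foldl_append]
  rw [hwgt] at ht
  set y := runW σ x with hydef
  rw [hrun]
  have hts : wgt σ ≤ t := le_trans (Nat.le_add_right _ _) ht
  have htr : wgt ρ ≤ t := le_trans (Nat.le_add_left _ _) ht
  set v : Vn n → ℕ := Sum.elim x (fun _ => t) with hvdef
  set w : Vn n → ℕ := Sum.elim (fun j => eval v (p j)) (fun _ => t) with hwdef
  have hyw : ∀ s : Vn n, Sum.elim y (fun _ => t) s ≤ w s := by
    rintro (j | u)
    · exact hbp x t hts j
    · exact le_rfl
  have hwv : w = Sum.elim (fun j => eval v (p j)) (fun _ => v (Sum.inr ())) := rfl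
  by_cases hself : i ∈ (A i).vars
  · -- self-dependent component
    have hqz := hbq y (wgt ρ) le_rfl i
    rw [hq i hself] at hqz
    simp only [map_add, map_mul, eval_X, Sum.elim_inl, Sum.elim_inr] at hqz
    have hpy := hbp x (wgt σ) le_rfl i
    rw [hp i hself] at hpy
    simp only [map_add, map_mul, eval_X, Sum.elim_inl, Sum.elim_inr] at hpy
    set M := eval v (pjoin (p' i) (tcomp (q' i) p)) with hMdef
    have hP : eval (Sum.elim x (fun _ => wgt σ)) (p' i) ≤ M := by
      refine le_trans (evalMono (p' i) (v := Sum.elim x (fun _ => wgt σ)) (w := v) ?_) ?_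
      · rintro (j | u)
        · exact le_rfl
        · exact hts
      · exact evalCoeffLe _ _
          (fun m => le_trans (le_max_left _ _) (coeffPjoin (p' i) (tcomp (q' i) p) m)) v
    have hQ : eval (Sum.elim y (fun _ => wgt ρ)) (q' i) ≤ M := by
      have h1 : eval (Sum.elim y (fun _ => wgt ρ)) (q' i) ≤ eval w (q' i) := by
        refine evalMono (q' i) ?_
        rintro (j | u)
        · exact hbp x t hts j
        · exact htr
      have h2 : eval w (q' i) = eval v (tcomp (q' i) p) := by
        rw [evalTcomp, ← hwv]
      refine le_trans h1 ?_
      rw [h2]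
      exact evalCoeffLe _ _
        (fun m => le_trans (le_max_right _ _) (coeffPjoin (p' i) (tcomp (q' i) p) m)) v
    rw [(hr i).1 hself]
    simp only [map_add, map_mul, eval_X, hvdef, Sum.elim_inl, Sum.elim_inr]
    rw [← hvdef, ← hMdef]
    calc runW ρ y i ≤ y i + wgt ρ * eval (Sum.elim y (fun _ => wgt ρ)) (q' i) := hqz
      _ ≤ (x i + wgt σ * eval (Sum.elim x (fun _ => wgt σ)) (p' i)) + wgt ρ * M :=
          Nat.add_le_add hpy (Nat.mul_le_mul_left _ hQ)
      _ ≤ (x i + wgt σ * M) + wgt ρ * M :=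
          Nat.add_le_add_right (Nat.add_le_add_left (Nat.mul_le_mul_left _ hP) _) _
      _ = x i + (wgt σ + wgt ρ) * M := by ring
      _ ≤ x i + t * M := Nat.add_le_add_left (Nat.mul_le_mul_right _ ht) _
  · -- non-self-dependent component
    rw [(hr i).2 hself, evalTcomp, ← hwv]
    exact le_trans (hbq y t htr i) (evalMono (q i) hyw)
end
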